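/- If R ∈ F_n^⊥, then for every uncountable antichain X ⊆ R there are σ, τ ∈ X with σ ∧ τ ∈ K^{[n]}. -/

import Mathlib

noncomputable section

namespace Basis5

/-- The first uncountable ordinal. -/
def omega1 : Ordinal.{0} := (Cardinal.aleph 1).ord

/-- A node of the binary tree `2^{<ω₁}`: a function defined (i.e. `some`-valued)
exactly on a countable ordinal. -/
def IsNodeFun (f : Ordinal.{0} → Option Bool) : Prop :=
  ∃ a, a < omega1 ∧ ∀ ξ, (f ξ).isSome ↔ ξ < a

def BNode := {f : Ordinal → Option Bool // IsNodeFun f}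

/-- The height (domain) of a node. -/
def ht (t : BNode) : Ordinal := sInf {a | ∀ ξ, (t.1 ξ).isSome ↔ ξ < a}

/-- Restriction of a node to (at most) height `α`. -/
def restrict (t : BNode) (α : Ordinal) : BNode :=
  ⟨fun ξ => if ξ < α then t.1 ξ else none, by
    obtain ⟨a, ha, hfa⟩ := t.2
    refine ⟨min α a, lt_of_le_of_lt (min_le_right _ _) ha, fun ξ => ?_⟩
    by_cases h : ξ < α
    · simp [h, hfa ξ, lt_min_iff]
    · simp [h, lt_min_iff]⟩

/-- `s` is an initial segment of `t` (the tree order of `2^{<ω₁}`). -/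
def extends' (s t : BNode) : Prop := restrict t (ht s) = s

/-- `s` and `t` are incomparable in the tree order. -/
def Incomp (s t : BNode) : Prop := ¬ extends' s t ∧ ¬ extends' t s

/-- `D(s,t)`, the set of coordinates where `s` and `t` differ. -/
def diffSet (s t : BNode) : Set Ordinal := {ξ | s.1 ξ ≠ t.1 ξ}

/-- `Δ(s,t) = min D(s,t)`. -/
def delta (s t : BNode) : Ordinal := sInf (diffSet s t)

/-- The meet `s ∧ t = s ↾ Δ(s,t)`. -/
def meet (s t : BNode) : BNode := restrict s (delta s t)

/-- Lexicographic (non-strict) order on nodes of the same height. -/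
def lexLE (s t : BNode) : Prop := s = t ∨ t.1 (delta s t) = some true

/-- `∧(X)`: the set of pairwise meets of incomparable elements of `X`. -/
def wedgeSet (X : Set BNode) : Set BNode :=
  {w | ∃ s ∈ X, ∃ t ∈ X, Incomp s t ∧ w = meet s t}

def DownClosed (A : Set BNode) : Prop := ∀ t ∈ A, ∀ α, restrict t α ∈ A

def IsAntichainN (X : Set BNode) : Prop := ∀ s ∈ X, ∀ t ∈ X, s ≠ t → Incomp s t

/-- An Aronszajn tree: uncountable, downward closed, countable levels and chains. -/
def IsAronszajn (T : Set BNode) : Prop :=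
  DownClosed T ∧ ¬ T.Countable ∧ (∀ α, {t : BNode | t ∈ T ∧ ht t = α}.Countable) ∧
    ∀ c : Set BNode, c ⊆ T → (∀ s ∈ c, ∀ t ∈ c, extends' s t ∨ extends' t s) → c.Countable

/-- A subtree: an uncountable downward closed subset. -/
def IsSubtree (T A : Set BNode) : Prop := A ⊆ T ∧ DownClosed A ∧ ¬ A.Countable

def Coherent (T : Set BNode) : Prop :=
  ∀ s ∈ T, ∀ t ∈ T, ht s = ht t → (diffSet s t).Finite

def IsSpecial (T : Set BNode) : Prop :=
  ∃ f : BNode → ℕ, ∀ s ∈ T, ∀ t ∈ T, extends' s t → s ≠ t → f s ≠ f t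

def FinModClosed (T : Set BNode) : Prop :=
  ∀ t ∈ T, ∀ s : BNode, ht s = ht t → (diffSet s t).Finite → s ∈ T

/-- Club subsets of `ω₁`. -/
def IsClubBelow (C : Set Ordinal) : Prop :=
  C ⊆ Set.Iio omega1 ∧ (∀ a < omega1, ∃ b ∈ C, a < b) ∧
    ∀ a < omega1, (C ∩ Set.Iio a).Nonempty → sSup (C ∩ Set.Iio a) = a → a ∈ C

/-- Stationary subsets of `ω₁`. -/
def IsStationary (S : Set Ordinal) : Prop :=
  S ⊆ Set.Iio omega1 ∧ ∀ C, IsClubBelow C → (S ∩ C).Nonempty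

/-- `a` is a limit point of `C`. -/
def IsLimitOf (C : Set Ordinal) (a : Ordinal) : Prop :=
  (C ∩ Set.Iio a).Nonempty ∧ sSup (C ∩ Set.Iio a) = a

/-- Membership in `T^{[n]}`: an `≤_lex`-nondecreasing `n`-tuple from a single level of `T`. -/
def IsTup (T : Set BNode) (n : ℕ) (σ : Fin n → BNode) : Prop :=
  (∀ i, σ i ∈ T) ∧ (∀ i j, ht (σ i) = ht (σ j)) ∧
    ∀ i j : Fin n, i ≤ j → lexLE (σ i) (σ j)

/-- Coordinatewise restriction of a tuple. -/
def tres {n : ℕ} (σ : Fin n → BNode) (α : Ordinal) : Fin n → BNode :=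
  fun i => restrict (σ i) α

def tExt {n : ℕ} (σ τ : Fin n → BNode) : Prop := ∀ i, extends' (σ i) (τ i)

def tIncomp {n : ℕ} (σ τ : Fin n → BNode) : Prop := ¬ tExt σ τ ∧ ¬ tExt τ σ

def tdiff {n : ℕ} (σ τ : Fin n → BNode) : Set Ordinal :=
  {ξ | ∃ i, (σ i).1 ξ ≠ (τ i).1 ξ}

/-- `Δ(σ,τ)` for tuples: least level where some coordinate differs. -/
def tdelta {n : ℕ} (σ τ : Fin n → BNode) : Ordinal := sInf (tdiff σ τ)

def tmeet {n : ℕ} (σ τ : Fin n → BNode) : Fin n → BNode := tres σ (tdelta σ τ)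

def twedge {n : ℕ} (X : Set (Fin n → BNode)) : Set (Fin n → BNode) :=
  {w | ∃ σ ∈ X, ∃ τ ∈ X, tIncomp σ τ ∧ w = tmeet σ τ}

def tAntichain {n : ℕ} (X : Set (Fin n → BNode)) : Prop :=
  ∀ σ ∈ X, ∀ τ ∈ X, σ ≠ τ → tIncomp σ τ

/-- `σ ∈ K^{[n]} = K^n ∩ T^{[n]}`. -/
def KTup (T K : Set BNode) (n : ℕ) (σ : Fin n → BNode) : Prop :=
  IsTup T n σ ∧ ∀ i, σ i ∈ K

/-- The pair `{σ, τ}` (with `Ht σ ≤ Ht τ`) is regular: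
`D(τ(i), τ(0)) ∩ Ht(σ) = D(σ(i), σ(0))` for all `i < n`. -/
def RegPair (n : ℕ) (σ τ : Fin n → BNode) : Prop :=
  ∀ (h : 0 < n) (i : Fin n),
    diffSet (τ i) (τ ⟨0, h⟩) ∩ Set.Iio (ht (σ ⟨0, h⟩)) = diffSet (σ i) (σ ⟨0, h⟩)

/-- A set of tuples is regular if every pair of its elements is regular. -/
def RegSet {n : ℕ} (X : Set (Fin n → BNode)) : Prop :=
  ∀ σ ∈ X, ∀ τ ∈ X, (∀ i, ht (σ i) ≤ ht (τ i)) → RegPair n σ τ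

/-- A subtree of `T^{[n]}`: uncountable set of tuples closed under restriction. -/
def IsTupSubtree (T : Set BNode) (n : ℕ) (R : Set (Fin n → BNode)) : Prop :=
  (∀ σ ∈ R, IsTup T n σ) ∧ (∀ σ ∈ R, ∀ α, tres σ α ∈ R) ∧ ¬ R.Countable

/-- The family `F_n` of regular subtrees of `T^{[n]}` whose meets avoid `K^{[n]}`. -/
def Fn (T K : Set BNode) (n : ℕ) : Set (Set (Fin n → BNode)) :=
  {R | IsTupSubtree T n R ∧ RegSet R ∧ ∀ w ∈ twedge R, ¬ KTup T K n w}

/-- `F_n^⊥`: subtrees of `T^{[n]}` orthogonal to every member of `F_n`. -/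
def FnPerp (T K : Set BNode) (n : ℕ) : Set (Set (Fin n → BNode)) :=
  {B | IsTupSubtree T n B ∧ ∀ A ∈ Fn T K n, (A ∩ B).Countable}

/-- `⟨N_ξ : ξ ∈ C⟩` witnesses `φ₀(F_n)`. -/
def Phi0Witness (T K : Set BNode) (n : ℕ) (C : Set Ordinal)
    (N : Ordinal → Set (Set (Fin n → BNode))) : Prop :=
  IsClubBelow C ∧
  (∀ ξ ∈ C, (N ξ).Countable ∧ N ξ ⊆ Fn T K n ∪ FnPerp T K n) ∧
  (∀ ξ ∈ C, ∀ η ∈ C, ξ ≤ η → N ξ ⊆ N η) ∧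
  (∀ ν ∈ C, IsLimitOf C ν → N ν = ⋃ ξ ∈ C ∩ Set.Iio ν, N ξ) ∧
  (∀ ν ∈ C, ∀ σ : Fin n → BNode, IsTup T n σ → (∀ i, ht (σ i) = ν) →
    (∃ ν₀ < ν, ∀ ξ ∈ C, ν₀ < ξ → ξ < ν → ∃ A ∈ Fn T K n, A ∈ N ξ ∧ tres σ ξ ∈ A) ∨
    (∃ B ∈ FnPerp T K n, B ∈ N ν ∧ σ ∈ B))

/-- The coloring `K^{[n]}_φ`. -/
def KPhi (T K : Set BNode) (n : ℕ) (C : Set Ordinal)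
    (N : Ordinal → Set (Set (Fin n → BNode))) : Set (Fin n → BNode) :=
  {σ | IsTup T n σ ∧ ∃ ν ∈ C, (∀ i, ht (σ i) = ν) ∧
    ∃ B ∈ FnPerp T K n, B ∈ N ν ∧ σ ∈ B}

/-- The coloring `L^{[n]}_φ = (T^{[n]} ↾ C) \ K^{[n]}_φ`. -/
def LPhi (T K : Set BNode) (n : ℕ) (C : Set Ordinal)
    (N : Ordinal → Set (Set (Fin n → BNode))) : Set (Fin n → BNode) :=
  {σ | IsTup T n σ ∧ (∃ ν ∈ C, ∀ i, ht (σ i) = ν) ∧ σ ∉ KPhi T K n C N}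

/-- `ρ` is the `≤_lex`-sorted merge `σ ∪ τ` of the tuples `σ` and `τ`. -/
def IsMerge {n m : ℕ} (σ : Fin n → BNode) (τ : Fin m → BNode)
    (ρ : Fin (n + m) → BNode) : Prop :=
  (∀ i j : Fin (n + m), i ≤ j → lexLE (ρ i) (ρ j)) ∧
  (↑(List.ofFn ρ) : Multiset BNode) = ↑(List.ofFn σ) + ↑(List.ofFn τ)

/-- `σ` is a subsequence of `τ`. -/
def IsSubseq {m n : ℕ} (σ : Fin m → BNode) (τ : Fin n → BNode) : Prop :=
  ∃ ι : Fin m → Fin n, StrictMono ι ∧ σ = τ ∘ ι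

/-- A level sequence `{σ_α : α ∈ S}` in `T^{[n]}`. -/
def LevelSeq (T : Set BNode) (n : ℕ) (S : Set Ordinal)
    (σ : Ordinal → Fin n → BNode) : Prop :=
  ∀ α ∈ S, IsTup T n (σ α) ∧ ∀ i, ht (σ α i) = α

/-- The level sequence `{σ_α : α ∈ S}` is regular. -/
def RegSeq {n : ℕ} (S : Set Ordinal) (σ : Ordinal → Fin n → BNode) : Prop :=
  ∀ α ∈ S, ∀ β ∈ S, α ≤ β → RegPair n (σ α) (σ β)

/-- The tree `R_X` generated by `X` (downward closure). -/
def downClosure (X : Set BNode) : Set BNode :=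
  {r | ∃ t ∈ X, ∃ ξ ≤ ht t, r = restrict t ξ}

/-- The tree generated by a set of tuples. -/
def tDownClosure {n : ℕ} (X : Set (Fin n → BNode)) : Set (Fin n → BNode) :=
  {ρ | ∃ σ ∈ X, ∃ ξ, (∀ i, ξ ≤ ht (σ i)) ∧ ρ = tres σ ξ}

end Basis5
namespace Basis5

/-- Martin's Axiom `MA_{ℵ₁}`: every nonempty ccc partial preorder admits a filter
meeting any `ℵ₁`-many dense sets. -/
def CCCPre (P : Type 1) (le : P → P → Prop) : Prop :=
  ∀ A : Set P, (∀ p ∈ A, ∀ q ∈ A, p ≠ q → ¬ ∃ r, le r p ∧ le r q) → A.Countable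

def MAaleph1 : Prop :=
  ∀ (P : Type 1) (le : P → P → Prop), (∀ p, le p p) →
    (∀ p q r, le p q → le q r → le p r) → Nonempty P → CCCPre P le →
    ∀ (ι : Type 1) (D : ι → Set P), Cardinal.mk ι ≤ Cardinal.aleph 1 →
      (∀ i, ∀ p, ∃ q ∈ D i, le q p) →
      ∃ G : Set P, G.Nonempty ∧ (∀ p ∈ G, ∀ q, le p q → q ∈ G) ∧
        (∀ p ∈ G, ∀ q ∈ G, ∃ r ∈ G, le r p ∧ le r q) ∧ ∀ i, (G ∩ D i).Nonempty

/-- `π(X) = X`. -/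
def piClosed (X : Set BNode) : Prop :=
  ∀ s ∈ X, ∀ t ∈ X, ht s ≤ ht t → restrict t (ht s) ∈ X

/-- Every level-section of `X`, enumerated in `≤_lex`-increasing order, lies in `K_φ`. -/
def SectionsInKPhi (T K : Set BNode) (C : Set Ordinal)
    (N : (k : ℕ) → Ordinal → Set (Set (Fin k → BNode))) (X : Set BNode) : Prop :=
  ∀ α : Ordinal, {x ∈ X | ht x = α}.Nonempty →
    ∃ (k : ℕ) (ρ : Fin k → BNode), Function.Injective ρ ∧
      (∀ i j : Fin k, i ≤ j → lexLE (ρ i) (ρ j)) ∧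
      Set.range ρ = {x ∈ X | ht x = α} ∧ ρ ∈ KPhi T K k C (N k)

/-- All finite same-height `≤_lex`-sorted tuples from `X` lie in `K_φ`. -/
def FinLevelSubsetsInKPhi (T K : Set BNode) (C : Set Ordinal)
    (N : (k : ℕ) → Ordinal → Set (Set (Fin k → BNode))) (X : Set BNode) : Prop :=
  ∀ (k : ℕ) (ρ : Fin k → BNode), Function.Injective ρ → (∀ i, ρ i ∈ X) →
    (∀ i j, ht (ρ i) = ht (ρ j)) → (∀ i j : Fin k, i ≤ j → lexLE (ρ i) (ρ j)) →
    ρ ∈ KPhi T K k C (N k)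

section Forcing

variable {EM : Type 1}

/-- A condition of the forcing `∂*(K)`: a pair `(X_p, 𝓜_p)`.  Here `EM` is an abstract
type of (countable elementary submodels of `H(ω₂)`), `mem` its `∈`-relation,
`δe M = M ∩ ω₁`, and `E` the club `𝓔` of such models. -/
def IsCond (T K : Set BNode) (C : Set Ordinal)
    (N : (k : ℕ) → Ordinal → Set (Set (Fin k → BNode)))
    (mem : EM → EM → Prop) (δe : EM → Ordinal) (E : Set EM)
    (p : Set BNode × Set EM) : Prop :=
  p.1.Finite ∧ p.1 ⊆ T ∧ (∀ x ∈ p.1, ht x ∈ C) ∧ piClosed p.1 ∧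
  SectionsInKPhi T K C N p.1 ∧
  p.2.Finite ∧ p.2 ⊆ E ∧
  (∀ M ∈ p.2, ∀ M' ∈ p.2, M = M' ∨ mem M M' ∨ mem M' M) ∧
  (∀ x ∈ p.1, ∃ M ∈ p.2, ht x = δe M)

/-- The order of `∂*(K)`: coordinatewise reverse inclusion. -/
def condLE (p q : Set BNode × Set EM) : Prop := q.1 ⊆ p.1 ∧ q.2 ⊆ p.2

end Forcing

/-- Closure of `X` in the tree topology. -/
def clTree (X : Set BNode) : Set BNode :=
  X ∪ {t | Order.IsSuccLimit (ht t) ∧ ∀ β < ht t, ∃ s ∈ X, extends' s t ∧ β ≤ ht s}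

/-! ### Set-theoretic background: elementary submodels of `(V, ∈)`, properness, BPFA -/

/-- The language with a single binary relation (interpreted below as membership). -/
abbrev memLang : FirstOrder.Language := FirstOrder.Language.order

/-- `ZFSet.{0}` as a structure in the membership language: the unique binary relation
symbol is interpreted as `∈`. -/
instance : memLang.Structure ZFSet.{0} where
  RelMap | .le => fun x => x 0 ∈ x 1

/-- `R` is (codes) a partial order on the set `P`. -/
def ZIsPoset (P R : ZFSet.{0}) : Prop :=
  (∀ x y : ZFSet.{0}, ZFSet.pair x y ∈ R → x ∈ P ∧ y ∈ P) ∧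
  (∀ x ∈ P, ZFSet.pair x x ∈ R) ∧
  (∀ x y z : ZFSet.{0}, ZFSet.pair x y ∈ R → ZFSet.pair y z ∈ R → ZFSet.pair x z ∈ R) ∧
  (∀ x y : ZFSet.{0}, ZFSet.pair x y ∈ R → ZFSet.pair y x ∈ R → x = y)

def ZCompat (P R p q : ZFSet.{0}) : Prop :=
  ∃ r ∈ P, ZFSet.pair r p ∈ R ∧ ZFSet.pair r q ∈ R

def ZDense (P R D : ZFSet.{0}) : Prop :=
  (∀ x ∈ D, x ∈ P) ∧ ∀ p ∈ P, ∃ q ∈ D, ZFSet.pair q p ∈ R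

/-- Properness of the poset `(P, R)`, via countable elementary submodels of the
universe of sets: every condition in such a model has a generic extension. -/
def ZIsProper (P R : ZFSet.{0}) : Prop :=
  ∀ M : memLang.ElementarySubstructure ZFSet.{0}, (M : Set ZFSet.{0}).Countable →
    P ∈ (M : Set ZFSet.{0}) → R ∈ (M : Set ZFSet.{0}) →
    ∀ p ∈ (M : Set ZFSet.{0}), p ∈ P →
      ∃ q ∈ P, ZFSet.pair q p ∈ R ∧
        ∀ D ∈ (M : Set ZFSet.{0}), ZDense P R D →
          ∀ r ∈ P, ZFSet.pair r q ∈ R → ∃ s ∈ (M : Set ZFSet.{0}), s ∈ D ∧ ZCompat P R s r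

/-- The Bounded Proper Forcing Axiom: for every proper poset and `ℵ₁`-many maximal
antichains of size `≤ ℵ₁`, there is a filter meeting them all. -/
def BPFA : Prop :=
  ∀ P R : ZFSet.{0}, ZIsPoset P R → ZIsProper P R →
    ∀ (ι : Type 1) (A : ι → ZFSet.{0}), Cardinal.mk ι ≤ Cardinal.aleph 1 →
      (∀ i, (A i).toSet ⊆ P.toSet ∧ Cardinal.mk (A i).toSet ≤ Cardinal.aleph 1 ∧
        (∀ a ∈ A i, ∀ b ∈ A i, a ≠ b → ¬ ZCompat P R a b) ∧
        (∀ p ∈ P, ∃ a ∈ A i, ZCompat P R a p)) →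
      ∃ G : Set ZFSet.{0}, G ⊆ P.toSet ∧
        (∀ p ∈ G, ∀ q ∈ P.toSet, ZFSet.pair p q ∈ R → q ∈ G) ∧
        (∀ p ∈ G, ∀ q ∈ G, ∃ r ∈ G, ZFSet.pair r p ∈ R ∧ ZFSet.pair r q ∈ R) ∧
        ∀ i, ∃ a, a ∈ A i ∧ a ∈ G

/-! ### The axiom φ, stated for Aronszajn trees of `n`-tuples (the trees used in the paper) -/

/-- An Aronszajn tree of `n`-tuples (a subtree of the `n`-th power of `2^{<ω₁}`). -/
def TupAronszajn (n : ℕ) (𝒯 : Set (Fin n → BNode)) : Prop :=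
  (∀ σ ∈ 𝒯, (∀ i j, ht (σ i) = ht (σ j))) ∧
  (∀ σ ∈ 𝒯, ∀ α, tres σ α ∈ 𝒯) ∧ ¬ 𝒯.Countable ∧
  (∀ α, {σ ∈ 𝒯 | ∀ i, ht (σ i) = α}.Countable) ∧
  (∀ c ⊆ 𝒯, (∀ σ ∈ c, ∀ τ ∈ c, tExt σ τ ∨ tExt τ σ) → c.Countable)

/-- A subtree of a tuple-tree. -/
def TupSubtree {n : ℕ} (𝒯 A : Set (Fin n → BNode)) : Prop :=
  A ⊆ 𝒯 ∧ (∀ σ ∈ A, ∀ α, tres σ α ∈ A) ∧ ¬ A.Countable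

/-- `F^⊥` for a family `F` of subtrees of `𝒯`. -/
def GPerp {n : ℕ} (𝒯 : Set (Fin n → BNode)) (F : Set (Set (Fin n → BNode))) :
    Set (Set (Fin n → BNode)) :=
  {B | TupSubtree 𝒯 B ∧ ∀ A ∈ F, (A ∩ B).Countable}

/-- `φ₀(F)` for a family `F` of subtrees of the tree `𝒯`. -/
def GPhi0 {n : ℕ} (𝒯 : Set (Fin n → BNode)) (F : Set (Set (Fin n → BNode))) : Prop :=
  ∃ (C : Set Ordinal) (N : Ordinal → Set (Set (Fin n → BNode))),
    IsClubBelow C ∧ (∀ ξ ∈ C, (N ξ).Countable ∧ N ξ ⊆ F ∪ GPerp 𝒯 F) ∧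
    (∀ ξ ∈ C, ∀ η ∈ C, ξ ≤ η → N ξ ⊆ N η) ∧
    (∀ ν ∈ C, IsLimitOf C ν → N ν = ⋃ ξ ∈ C ∩ Set.Iio ν, N ξ) ∧
    ∀ ν ∈ C, ∀ σ ∈ 𝒯, (∀ i, ht (σ i) = ν) →
      (∃ ν₀ < ν, ∀ ξ ∈ C, ν₀ < ξ → ξ < ν → ∃ A ∈ F, A ∈ N ξ ∧ tres σ ξ ∈ A) ∨
      (∃ B ∈ GPerp 𝒯 F, B ∈ N ν ∧ σ ∈ B)

/-- The axiom `φ`: for every Aronszajn (tuple-)tree `𝒯` and every family `F`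
of subtrees of `𝒯`, `φ₀(F)` holds. -/
def phiAxiom : Prop :=
  ∀ (n : ℕ) (𝒯 : Set (Fin n → BNode)), TupAronszajn n 𝒯 →
    ∀ F : Set (Set (Fin n → BNode)), (∀ A ∈ F, TupSubtree 𝒯 A) → GPhi0 𝒯 F

end Basis5
namespace Basis5
section Stmt11Proof

open Set Cardinal

theorem bnode_ext {s t : BNode} (h : ∀ ξ, s.1 ξ = t.1 ξ) : s = t :=
  Subtype.ext (funext h)

theorem bnode_ne_iff {s t : BNode} (h : s ≠ t) : ∃ ξ, s.1 ξ ≠ t.1 ξ := by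
  by_contra hc; push_neg at hc; exact h (bnode_ext hc)

theorem ht_eq {t : BNode} {a : Ordinal} (h : ∀ ξ, (t.1 ξ).isSome ↔ ξ < a) : ht t = a := by
  have hmem : a ∈ {b : Ordinal | ∀ ξ, (t.1 ξ).isSome ↔ ξ < b} := h
  have huniq : ∀ b ∈ {b : Ordinal | ∀ ξ, (t.1 ξ).isSome ↔ ξ < b}, b = a := by
    intro b hb
    have h1 : ¬ a < b := fun hab => lt_irrefl a ((h a).mp ((hb a).mpr hab))
    have h2 : ¬ b < a := fun hba => lt_irrefl b ((hb b).mp ((h b).mpr hba))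
    exact le_antisymm (not_lt.mp h1) (not_lt.mp h2)
  have := huniq _ (csInf_mem ⟨a, hmem⟩)
  simpa [ht] using this

theorem isSome_iff (t : BNode) (ξ : Ordinal) : (t.1 ξ).isSome ↔ ξ < ht t := by
  obtain ⟨a, _, hfa⟩ := t.2
  rw [ht_eq hfa]; exact hfa ξ

theorem ht_lt_omega1 (t : BNode) : ht t < omega1 := by
  obtain ⟨a, ha, hfa⟩ := t.2
  rw [ht_eq hfa]; exact ha

theorem val_eq_none {t : BNode} {ξ : Ordinal} (h : ht t ≤ ξ) : t.1 ξ = none := by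
  cases hv : t.1 ξ with
  | none => rfl
  | some b =>
      have hs : (t.1 ξ).isSome := by rw [hv]; rfl
      exact absurd ((isSome_iff t ξ).mp hs) (not_lt.mpr h)

theorem restrict_val (t : BNode) (α ξ : Ordinal) :
    (restrict t α).1 ξ = if ξ < α then t.1 ξ else none := rfl

theorem ht_restrict (t : BNode) (α : Ordinal) : ht (restrict t α) = min α (ht t) := by
  apply ht_eq; intro ξ
  by_cases h : ξ < α
  · simp [restrict_val, h, isSome_iff, lt_min_iff]
  · simp [restrict_val, h, lt_min_iff]

theorem restrict_restrict (t : BNode) (α γ : Ordinal) :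
    restrict (restrict t α) γ = restrict t (min γ α) := by
  apply bnode_ext; intro ξ
  simp only [restrict_val, lt_min_iff]
  by_cases h1 : ξ < γ <;> by_cases h2 : ξ < α <;> simp [h1, h2]

theorem restrict_eq_of_agree {s t : BNode} {α : Ordinal}
    (h : ∀ ξ < α, s.1 ξ = t.1 ξ) : restrict s α = restrict t α := by
  apply bnode_ext; intro ξ
  simp only [restrict_val]
  by_cases h1 : ξ < α
  · simp [h1, h ξ h1]
  · simp [h1]

theorem diffSet_restrict (s t : BNode) (α : Ordinal) :
    diffSet (restrict s α) (restrict t α) = diffSet s t ∩ Set.Iio α := by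
  ext ξ
  simp only [diffSet, Set.mem_setOf_eq, Set.mem_inter_iff, Set.mem_Iio, restrict_val]
  by_cases h1 : ξ < α <;> simp [h1]

theorem diffSet_lt_ht {s t : BNode} (hst : ht s = ht t) {ξ} (h : ξ ∈ diffSet s t) :
    ξ < ht s := by
  by_contra hc
  exact h (by
    rw [val_eq_none (not_lt.mp hc),
      val_eq_none (show ht t ≤ ξ by rw [← hst]; exact not_lt.mp hc)])

theorem diffSet_nonempty {s t : BNode} (h : s ≠ t) : (diffSet s t).Nonempty := by
  obtain ⟨ξ, hξ⟩ := bnode_ne_iff h; exact ⟨ξ, hξ⟩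

theorem lexLE_restrict {s t : BNode} (hst : lexLE s t) (α : Ordinal) :
    lexLE (restrict s α) (restrict t α) := by
  rcases hst with rfl | h
  · exact Or.inl rfl
  by_cases he : restrict s α = restrict t α
  · exact Or.inl he
  · right
    obtain ⟨ξ, hξ⟩ := diffSet_nonempty he
    rw [diffSet_restrict] at hξ
    have hmemfull : delta s t ∈ diffSet s t ∩ Set.Iio α :=
      ⟨csInf_mem ⟨ξ, hξ.1⟩,
       lt_of_le_of_lt (csInf_le (OrderBot.bddBelow _) hξ.1) hξ.2⟩
    have hdelta : delta (restrict s α) (restrict t α) = delta s t := by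
      apply le_antisymm
      · rw [delta, diffSet_restrict]
        exact csInf_le (OrderBot.bddBelow _) hmemfull
      · apply csInf_le_csInf (OrderBot.bddBelow _)
        · exact ⟨ξ, by rw [diffSet_restrict]; exact hξ⟩
        · rw [diffSet_restrict]; exact Set.inter_subset_left
    rw [hdelta, restrict_val, if_pos (show delta s t < α from hmemfull.2)]
    exact h

theorem tres_tres {n : ℕ} (σ : Fin n → BNode) (α γ : Ordinal) :
    tres (tres σ α) γ = tres σ (min γ α) := funext fun i => restrict_restrict _ _ _

theorem isTup_tres {T : Set BNode} (hT : DownClosed T) {n : ℕ} {σ : Fin n → BNode}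
    (h : IsTup T n σ) (α : Ordinal) : IsTup T n (tres σ α) := by
  refine ⟨fun i => hT _ (h.1 i) α, fun i j => ?_, fun i j hij => ?_⟩
  · show ht (restrict (σ i) α) = ht (restrict (σ j) α)
    rw [ht_restrict, ht_restrict, h.2.1 i j]
  · exact lexLE_restrict (h.2.2 i j hij) α

theorem tdiff_nonempty {n : ℕ} {σ τ : Fin n → BNode} (h : σ ≠ τ) : (tdiff σ τ).Nonempty := by
  have hex : ∃ i, σ i ≠ τ i := by
    by_contra hc; push_neg at hc; exact h (funext hc)
  obtain ⟨i, hi⟩ := hex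
  obtain ⟨ξ, hξ⟩ := bnode_ne_iff hi
  exact ⟨ξ, ⟨i, hξ⟩⟩

theorem tdelta_mem {n : ℕ} {σ τ : Fin n → BNode} (h : σ ≠ τ) : tdelta σ τ ∈ tdiff σ τ :=
  csInf_mem (tdiff_nonempty h)

theorem tdelta_lb {n : ℕ} {σ τ : Fin n → BNode} {x : Ordinal} (h : x < tdelta σ τ)
    (i : Fin n) : (σ i).1 x = (τ i).1 x := by
  by_contra hc
  have hmem : x ∈ tdiff σ τ := ⟨i, hc⟩
  have hle : tdelta σ τ ≤ x := csInf_le (OrderBot.bddBelow _) hmem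
  exact absurd hle (not_le.mpr h)

theorem countable_Iio {o : Ordinal.{0}} (h : o < omega1) : (Set.Iio o).Countable := by
  rw [Cardinal.countable_iff_lt_aleph_one, Ordinal.mk_Iio_ordinal]
  exact Cardinal.lift_lt_aleph_one.mpr (Cardinal.lt_ord.mp h)

theorem omega1_pos : (0 : Ordinal) < omega1 :=
  Cardinal.lt_ord.mpr (by simpa using lt_of_le_of_lt (zero_le ℵ₀) Cardinal.aleph0_lt_aleph_one)

theorem countable_Iic {o : Ordinal.{0}} (h : o < omega1) : (Set.Iic o).Countable := by
  have hlim : Order.IsSuccLimit omega1 := Cardinal.isSuccLimit_ord (le_of_lt Cardinal.aleph0_lt_aleph_one)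
  have h1 : o + 1 < omega1 := by
    rw [Ordinal.add_one_eq_succ]; exact hlim.succ_lt h
  refine (countable_Iio h1).mono ?_
  intro x hx
  have h2 : o < o + 1 := by rw [Ordinal.add_one_eq_succ]; exact Order.lt_succ o
  exact lt_of_le_of_lt (Set.mem_Iic.mp hx) h2

theorem uncountable_fiber {α : Type*} {β : Type*} {Z : Set α} (hZ : ¬ Z.Countable)
    (f : α → β) (himg : (f '' Z).Countable) :
    ∃ b, b ∈ f '' Z ∧ ¬ {ρ ∈ Z | f ρ = b}.Countable := by
  by_contra hc; push_neg at hc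
  apply hZ
  have hsub : Z ⊆ ⋃ b ∈ f '' Z, {ρ ∈ Z | f ρ = b} := fun ρ hρ =>
    Set.mem_biUnion (Set.mem_image_of_mem f hρ) ⟨hρ, rfl⟩
  exact (himg.biUnion fun b hb => hc b hb).mono hsub

theorem uncountable_image {α : Type*} {Z : Set α} {f : α → Ordinal} (hZ : ¬ Z.Countable)
    (hfib : ∀ b, {ρ ∈ Z | f ρ = b}.Countable) : ¬ (f '' Z).Countable := by
  intro hc
  obtain ⟨b, _, hb⟩ := uncountable_fiber hZ f hc
  exact hb (hfib b)

theorem exists_section {α : Type*} {Z : Set α} {f : α → Ordinal}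
    (himg : ¬ (f '' Z).Countable) {β : Ordinal} (hβ : β < omega1) :
    ∃ Y, Y ⊆ Z ∧ ¬ Y.Countable ∧ Set.InjOn f Y ∧ ∀ ρ ∈ Y, β < f ρ := by
  have hZne : Z.Nonempty := by
    rcases Z.eq_empty_or_nonempty with rfl | h
    · exact absurd (by simp : ((f '' (∅ : Set α)).Countable)) himg
    · exact h
  set V : Set Ordinal := (f '' Z) \ Set.Iic β with hV
  have hVunc : ¬ V.Countable := by
    intro hc
    apply himg
    refine (hc.union (countable_Iic hβ)).mono ?_
    intro x hx
    by_cases h : x ≤ β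
    · exact Or.inr h
    · exact Or.inl ⟨hx, h⟩
  have hch : ∀ v : Ordinal, ∃ ρ, v ∈ V → (ρ ∈ Z ∧ f ρ = v) := by
    intro v
    by_cases hv : v ∈ V
    · obtain ⟨ρ, hρ, hfρ⟩ := hv.1
      exact ⟨ρ, fun _ => ⟨hρ, hfρ⟩⟩
    · exact ⟨hZne.choose, fun hvv => absurd hvv hv⟩
  choose g hg using hch
  refine ⟨g '' V, ?_, ?_, ?_, ?_⟩
  · rintro y ⟨v, hv, rfl⟩; exact (hg v hv).1
  · intro hc
    apply hVunc
    have hsub : V ⊆ f '' (g '' V) := fun v hv =>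
      ⟨g v, Set.mem_image_of_mem g hv, (hg v hv).2⟩
    exact (hc.image f).mono hsub
  · rintro y ⟨v, hv, rfl⟩ y' ⟨v', hv', rfl⟩ he
    have : v = v' := by rw [← (hg v hv).2, he, (hg v' hv').2]
    rw [this]
  · rintro y ⟨v, hv, rfl⟩
    rw [(hg v hv).2]
    exact not_le.mp hv.2

theorem bounded_part_countable {T : Set BNode}
    (hlev : ∀ α, {t : BNode | t ∈ T ∧ ht t = α}.Countable)
    {n : ℕ} (X : Set (Fin n → BNode)) (hX : ∀ ρ ∈ X, ∀ i, ρ i ∈ T)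
    {γ : Ordinal} (hγ : γ < omega1) :
    {ρ ∈ X | ∀ i, ht (ρ i) ≤ γ}.Countable := by
  have hSc : (⋃ α ∈ Set.Iic γ, {t : BNode | t ∈ T ∧ ht t = α}).Countable :=
    (countable_Iic hγ).biUnion fun α _ => hlev α
  refine (Set.countable_pi fun _ : Fin n => hSc).mono ?_
  rintro ρ ⟨hρX, hρh⟩ i
  exact Set.mem_biUnion (hρh i) ⟨hX ρ hρX i, rfl⟩

theorem core_refine {α : Type*} {n : ℕ} :
    ∀ (m : ℕ) (Z : Set α) (E : α → Fin n → Set Ordinal) (a : α → Ordinal) (β : Ordinal),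
    ¬ Z.Countable → β < omega1 →
    (∀ ρ ∈ Z, a ρ < omega1) →
    (∀ ρ ∈ Z, ∀ i, E ρ i ⊆ Set.Iio (a ρ)) →
    (∀ ρ ∈ Z, (⋃ i, E ρ i).encard ≤ (m : ℕ∞)) →
    (∀ γ, γ < omega1 → {ρ ∈ Z | a ρ ≤ γ}.Countable) →
    ∃ Y, Y ⊆ Z ∧ ¬ Y.Countable ∧ ∃ η : α → Ordinal, Set.InjOn η Y ∧
      (∀ ρ ∈ Y, β < η ρ ∧ η ρ ≤ a ρ) ∧
      ∃ D : Fin n → Set Ordinal, ∀ ρ ∈ Y, ∀ i, E ρ i ∩ Set.Iio (η ρ) = D i := by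
  intro m
  induction m with
  | zero =>
    intro Z E a β hZ hβ ha hsub hcard hlev
    have hE : ∀ ρ ∈ Z, ∀ i, E ρ i = ∅ := by
      intro ρ hρ i
      have hu : (⋃ i, E ρ i) = ∅ := by
        have h1 := hcard ρ hρ
        rw [Nat.cast_zero, nonpos_iff_eq_zero, Set.encard_eq_zero] at h1
        exact h1
      exact Set.eq_empty_of_subset_empty (hu ▸ Set.subset_iUnion (fun i => E ρ i) i)
    have hfib : ∀ b, {ρ ∈ Z | a ρ = b}.Countable := by
      intro b
      by_cases hb : b < omega1
      · exact (hlev b hb).mono (by rintro ρ ⟨h1, h2⟩; exact ⟨h1, le_of_eq h2⟩)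
      · have hemp : {ρ ∈ Z | a ρ = b} = ∅ := by
          ext ρ
          simp only [Set.mem_setOf_eq, Set.mem_empty_iff_false, iff_false, not_and]
          rintro h1 rfl
          exact hb (ha ρ h1)
        rw [hemp]; exact Set.countable_empty
    obtain ⟨Y, hYZ, hYunc, hinj, hβlt⟩ := exists_section (uncountable_image hZ hfib) hβ
    refine ⟨Y, hYZ, hYunc, a, hinj, fun ρ hρ => ⟨hβlt ρ hρ, le_rfl⟩, fun _ => ∅, ?_⟩
    intro ρ hρ i
    rw [hE ρ (hYZ hρ) i]
    exact Set.empty_inter _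
  | succ m IH =>
    intro Z E a β hZ hβ ha hsub hcard hlev
    classical
    by_cases hZ₁ : {ρ ∈ Z | (⋃ i, E ρ i) = ∅}.Countable
    · set Z₂ : Set α := Z \ {ρ ∈ Z | (⋃ i, E ρ i) = ∅} with hZ₂def
      have hZ₂unc : ¬ Z₂.Countable := by
        intro hc
        apply hZ
        refine (hc.union hZ₁).mono ?_
        intro ρ hρ
        by_cases h : ρ ∈ {ρ ∈ Z | (⋃ i, E ρ i) = ∅}
        · exact Or.inr h
        · exact Or.inl ⟨hρ, h⟩
      have hZ₂Z : Z₂ ⊆ Z := Set.diff_subset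
      have hne : ∀ ρ ∈ Z₂, (⋃ i, E ρ i).Nonempty := by
        intro ρ hρ
        rcases Set.eq_empty_or_nonempty (⋃ i, E ρ i) with h | h
        · exact absurd (⟨hρ.1, h⟩ : ρ ∈ {ρ ∈ Z | (⋃ i, E ρ i) = ∅}) hρ.2
        · exact h
      set d : α → Ordinal := fun ρ => sInf (⋃ i, E ρ i) with hd
      have hdmem : ∀ ρ ∈ Z₂, d ρ ∈ ⋃ i, E ρ i := fun ρ hρ => csInf_mem (hne ρ hρ)
      have hdlt : ∀ ρ ∈ Z₂, d ρ < a ρ := by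
        intro ρ hρ
        obtain ⟨i, hi⟩ := Set.mem_iUnion.mp (hdmem ρ hρ)
        exact hsub ρ hρ.1 i hi
      have hdlb : ∀ ρ ∈ Z₂, ∀ x ∈ ⋃ i, E ρ i, d ρ ≤ x := fun ρ _ x hx =>
        csInf_le (OrderBot.bddBelow _) hx
      by_cases hV : (d '' Z₂).Countable
      · -- bounded case: pigeonhole on (min, labels)
        set F : α → Ordinal × Set (Fin n) := fun ρ => (d ρ, {i | d ρ ∈ E ρ i}) with hF
        have himg : (F '' Z₂).Countable := by
          have hsub2 : F '' Z₂ ⊆ (d '' Z₂) ×ˢ (Set.univ : Set (Set (Fin n))) := by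
            rintro p ⟨ρ, hρ, rfl⟩
            exact ⟨Set.mem_image_of_mem d hρ, Set.mem_univ _⟩
          exact (hV.prod Set.countable_univ).mono hsub2
        obtain ⟨⟨v, L⟩, hvL, hW⟩ := uncountable_fiber hZ₂unc F himg
        set W := {ρ ∈ Z₂ | F ρ = (v, L)} with hWdef
        have hWd : ∀ ρ ∈ W, d ρ = v := fun ρ hρ => congrArg Prod.fst hρ.2
        have hWL : ∀ ρ ∈ W, {i | d ρ ∈ E ρ i} = L := fun ρ hρ => congrArg Prod.snd hρ.2
        have hv_lt : v < omega1 := by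
          obtain ⟨ρ, hρ, hFρ⟩ := hvL
          have hdv : d ρ = v := congrArg Prod.fst hFρ
          rw [← hdv]
          exact lt_trans (hdlt ρ hρ) (ha ρ hρ.1)
        have hWZ : W ⊆ Z := fun ρ hρ => hρ.1.1
        obtain ⟨Y, hYW, hYunc, η, hinj, hbd, D', hD'⟩ :=
          IH W (fun ρ i => E ρ i \ {v}) a (max β v) hW (max_lt hβ hv_lt)
            (fun ρ hρ => ha ρ (hWZ hρ))
            (fun ρ hρ i => Set.diff_subset.trans (hsub ρ (hWZ hρ) i))
            (fun ρ hρ => by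
              have hmem' : v ∈ ⋃ i, E ρ i := (hWd ρ hρ) ▸ hdmem ρ hρ.1
              have heq : (⋃ i, E ρ i \ {v}) = (⋃ i, E ρ i) \ {v} :=
                (Set.iUnion_diff _ _).symm
              rw [heq]
              have h2 : ((⋃ i, E ρ i) \ {v}).encard + 1 = (⋃ i, E ρ i).encard :=
                Set.encard_diff_singleton_add_one hmem'
              have h3 : ((⋃ i, E ρ i) \ {v}).encard + 1 ≤ (m : ℕ∞) + 1 := by
                rw [h2]
                have := hcard ρ (hWZ hρ)
                rwa [Nat.cast_succ] at this
              exact (ENat.add_le_add_iff_right (by simp)).mp h3)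
            (fun γ hγ => by
              refine Set.Countable.mono ?_ (hlev γ hγ)
              rintro ρ ⟨h1, h2⟩
              exact ⟨hWZ h1, h2⟩)
        refine ⟨Y, fun ρ hρ => hWZ (hYW hρ), hYunc, η, hinj,
          fun ρ hρ => ⟨lt_of_le_of_lt (le_max_left β v) (hbd ρ hρ).1, (hbd ρ hρ).2⟩,
          fun i => if i ∈ L then insert v (D' i) else D' i, ?_⟩
        intro ρ hρ i
        show E ρ i ∩ Set.Iio (η ρ) = if i ∈ L then insert v (D' i) else D' i
        have hvη : v < η ρ := lt_of_le_of_lt (le_max_right β v) (hbd ρ hρ).1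
        have hcut := hD' ρ hρ i
        have hLiff : i ∈ L ↔ v ∈ E ρ i := by
          rw [← hWL ρ (hYW hρ)]
          simp only [Set.mem_setOf_eq, hWd ρ (hYW hρ)]
        by_cases hiL : i ∈ L
        · rw [if_pos hiL]
          ext x
          simp only [Set.mem_inter_iff, Set.mem_Iio, Set.mem_insert_iff]
          constructor
          · rintro ⟨hxE, hxlt⟩
            by_cases hxv : x = v
            · exact Or.inl hxv
            · refine Or.inr ?_
              rw [← hcut]
              exact ⟨⟨hxE, hxv⟩, hxlt⟩
          · rintro (rfl | hx')
            · exact ⟨hLiff.mp hiL, hvη⟩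
            · rw [← hcut] at hx'
              exact ⟨hx'.1.1, hx'.2⟩
        · rw [if_neg hiL, ← hcut,
            Set.diff_singleton_eq_self (fun h => hiL (hLiff.mpr h))]
      · -- unbounded case
        obtain ⟨Y, hYZ₂, hYunc, hinj, hβlt⟩ := exists_section hV hβ
        refine ⟨Y, fun ρ hρ => (hYZ₂ hρ).1, hYunc, d, hinj,
          fun ρ hρ => ⟨hβlt ρ hρ, le_of_lt (hdlt ρ (hYZ₂ hρ))⟩, fun _ => ∅, ?_⟩
        intro ρ hρ i
        apply Set.eq_empty_iff_forall_notMem.mpr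
        rintro x ⟨hxE, hxlt⟩
        exact absurd (hdlb ρ (hYZ₂ hρ) x (Set.mem_iUnion.mpr ⟨i, hxE⟩)) (not_le.mpr hxlt)
    · -- Z₁ uncountable: all diff-sets empty there
      obtain ⟨Y, hYZ₁, hYunc, η, hinj, hbd, D, hD⟩ :=
        IH {ρ ∈ Z | (⋃ i, E ρ i) = ∅} E a β hZ₁ hβ (fun ρ hρ => ha ρ hρ.1)
          (fun ρ hρ i => hsub ρ hρ.1 i)
          (fun ρ hρ => by rw [hρ.2]; simp)
          (fun γ hγ => by
            refine Set.Countable.mono ?_ (hlev γ hγ)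
            rintro ρ ⟨h1, h2⟩
            exact ⟨h1.1, h2⟩)
      exact ⟨Y, fun ρ hρ => (hYZ₁ hρ).1, hYunc, η, hinj, hbd, D, hD⟩

end Stmt11Proof

/-- if `R ∈ F_n^⊥` then every uncountable antichain `X ⊆ R` contains
`σ, τ` with `σ ∧ τ ∈ K^{[n]}`. -/
theorem stmt11 (T K : Set BNode) (hcoh : Coherent T) (hAr : IsAronszajn T)
    (hKT : K ⊆ T) (n : ℕ) (R : Set (Fin n → BNode)) (hR : R ∈ FnPerp T K n)
    (X : Set (Fin n → BNode)) (hXR : X ⊆ R) (hanti : tAntichain X)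
    (hunc : ¬ X.Countable) :
    ∃ σ ∈ X, ∃ τ ∈ X, tIncomp σ τ ∧ KTup T K n (tmeet σ τ) := by
  by_contra hcon
  push_neg at hcon
  rcases Nat.eq_zero_or_pos n with hn0 | hn
  · subst hn0
    exact hunc (Set.Subsingleton.countable (fun x _ y _ => funext fun i => i.elim0))
  have hTup : ∀ ρ ∈ X, IsTup T n ρ := fun ρ hρ => hR.1.1 ρ (hXR hρ)
  set i0 : Fin n := ⟨0, hn⟩ with hi0def
  have hEsub : ∀ ρ ∈ X, ∀ i, diffSet (ρ i) (ρ i0) ⊆ Set.Iio (ht (ρ i0)) := by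
    intro ρ hρ i ξ hξ
    have h1 : ht (ρ i) = ht (ρ i0) := (hTup ρ hρ).2.1 i i0
    exact Set.mem_Iio.mpr (h1 ▸ diffSet_lt_ht h1 hξ)
  have hEfin : ∀ ρ ∈ X, (⋃ i, diffSet (ρ i) (ρ i0)).Finite := fun ρ hρ =>
    Set.finite_iUnion fun i =>
      hcoh (ρ i) ((hTup ρ hρ).1 i) (ρ i0) ((hTup ρ hρ).1 i0) ((hTup ρ hρ).2.1 i i0)
  have hlevX : ∀ γ, γ < omega1 → {ρ ∈ X | ht (ρ i0) ≤ γ}.Countable := by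
    intro γ hγ
    refine Set.Countable.mono ?_
      (bounded_part_countable hAr.2.2.1 X (fun ρ hρ i => (hTup ρ hρ).1 i) hγ)
    rintro ρ ⟨h1, h2⟩
    exact ⟨h1, fun i => le_trans (le_of_eq ((hTup ρ h1).2.1 i i0)) h2⟩
  -- pigeonhole on the size of the union of difference sets
  obtain ⟨c, hcmem, hX₁unc⟩ := uncountable_fiber hunc
    (fun ρ => (⋃ i, diffSet (ρ i) (ρ i0)).encard) (Set.to_countable _)
  obtain ⟨ρc, hρcX, hceq⟩ := hcmem
  obtain ⟨m, hm⟩ : ∃ m : ℕ, c = (m : ℕ∞) := by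
    have hct : c ≠ ⊤ := by
      rw [← hceq]
      exact (hEfin ρc hρcX).encard_lt_top.ne
    obtain ⟨m, hm⟩ := WithTop.ne_top_iff_exists.mp hct
    exact ⟨m, hm.symm⟩
  obtain ⟨Y, hYX₁, hYunc, η, hinj, hbd, D, hD⟩ :=
    core_refine m {ρ ∈ X | (⋃ i, diffSet (ρ i) (ρ i0)).encard = c}
      (fun ρ i => diffSet (ρ i) (ρ i0)) (fun ρ => ht (ρ i0)) 0 hX₁unc omega1_pos
      (fun ρ _ => ht_lt_omega1 _)
      (fun ρ hρ i => hEsub ρ hρ.1 i)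
      (fun ρ hρ => le_of_eq (hm ▸ hρ.2))
      (fun γ hγ => by
        refine Set.Countable.mono ?_ (hlevX γ hγ)
        rintro ρ ⟨h1, h2⟩
        exact ⟨h1.1, h2⟩)
  have hYX : Y ⊆ X := fun ρ hρ => (hYX₁ hρ).1
  have hbd' : ∀ ρ ∈ Y, η ρ ≤ ht (ρ i0) := fun ρ hρ => (hbd ρ hρ).2
  have hD' : ∀ ρ ∈ Y, ∀ i, diffSet (ρ i) (ρ i0) ∩ Set.Iio (η ρ) = D i := hD
  -- the generated subtree A
  set A : Set (Fin n → BNode) := {τ | ∃ ρ ∈ Y, ∃ ξ, ξ ≤ η ρ ∧ τ = tres ρ ξ} with hAdef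
  have hAR : A ⊆ R := by
    rintro τ ⟨ρ, hρ, ξ, _, rfl⟩
    exact hR.1.2.1 ρ (hXR (hYX hρ)) ξ
  have hhtA : ∀ ρ ∈ Y, ∀ ξ, ξ ≤ η ρ → ∀ i, ht (tres ρ ξ i) = ξ := by
    intro ρ hρ ξ hξ i
    show ht (restrict (ρ i) ξ) = ξ
    rw [ht_restrict]
    exact min_eq_left (le_trans hξ (le_trans (hbd' ρ hρ)
      (le_of_eq ((hTup ρ (hYX hρ)).2.1 i0 i))))
  -- A is an uncountable subtree of T^{[n]}
  have hA_tup : ∀ τ ∈ A, IsTup T n τ := by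
    rintro τ ⟨ρ, hρ, ξ, _, rfl⟩
    exact isTup_tres hAr.1 (hTup ρ (hYX hρ)) ξ
  have hA_closed : ∀ τ ∈ A, ∀ ξ', tres τ ξ' ∈ A := by
    rintro τ ⟨ρ, hρ, ξ, hξ, rfl⟩ ξ'
    exact ⟨ρ, hρ, min ξ' ξ, le_trans (min_le_right ξ' ξ) hξ, (tres_tres ρ ξ ξ').symm ▸ rfl⟩
  have hA_unc : ¬ A.Countable := by
    intro hc
    apply hYunc
    have hmapsto : Set.MapsTo (fun ρ => tres ρ (η ρ)) Y A := fun ρ hρ =>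
      ⟨ρ, hρ, η ρ, le_rfl, rfl⟩
    refine hmapsto.countable_of_injOn ?_ hc
    intro ρ hρ ρ' hρ' he
    apply hinj hρ hρ'
    have h1 := congrArg (fun σ => ht (σ i0)) he
    simpa [hhtA ρ hρ (η ρ) le_rfl i0, hhtA ρ' hρ' (η ρ') le_rfl i0] using h1
  -- difference sets of elements of A
  have hdiffA : ∀ ρ ∈ Y, ∀ ξ, ξ ≤ η ρ → ∀ i,
      diffSet (tres ρ ξ i) (tres ρ ξ i0) = D i ∩ Set.Iio ξ := by
    intro ρ hρ ξ hξ i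
    show diffSet (restrict (ρ i) ξ) (restrict (ρ i0) ξ) = D i ∩ Set.Iio ξ
    rw [diffSet_restrict, ← hD' ρ hρ i]
    ext x
    simp only [Set.mem_inter_iff, Set.mem_Iio]
    constructor
    · rintro ⟨h1, h2⟩
      exact ⟨⟨h1, lt_of_lt_of_le h2 hξ⟩, h2⟩
    · rintro ⟨⟨h1, _⟩, h2⟩
      exact ⟨h1, h2⟩
  have hreg : RegSet A := by
    rintro σ' ⟨ρ, hρ, ξ, hξ, rfl⟩ τ' ⟨ρ', hρ', ζ, hζ, rfl⟩ hle
    intro h i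
    have hi00 : (⟨0, h⟩ : Fin n) = i0 := rfl
    rw [hi00]
    have hξζ : ξ ≤ ζ := by
      have h2 := hle i0
      rwa [hhtA ρ hρ ξ hξ i0, hhtA ρ' hρ' ζ hζ i0] at h2
    rw [hdiffA ρ' hρ' ζ hζ i, hdiffA ρ hρ ξ hξ i, hhtA ρ hρ ξ hξ i0]
    ext x
    simp only [Set.mem_inter_iff, Set.mem_Iio]
    constructor
    · rintro ⟨⟨h1, _⟩, h2⟩
      exact ⟨h1, h2⟩
    · rintro ⟨h1, h2⟩
      exact ⟨⟨h1, lt_of_lt_of_le h2 hξζ⟩, h2⟩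
  -- comparability helper
  have hext_helper : ∀ ρ ∈ Y, ∀ ρ' ∈ Y, ∀ ξ ζ : Ordinal, ξ ≤ η ρ → ζ ≤ η ρ' → ξ ≤ ζ →
      (∀ x, x < ξ → ∀ i, (ρ i).1 x = (ρ' i).1 x) → tExt (tres ρ ξ) (tres ρ' ζ) := by
    intro ρ hρ ρ' hρ' ξ ζ hξ hζ hξζ hagree i
    show restrict (restrict (ρ' i) ζ) (ht (restrict (ρ i) ξ)) = restrict (ρ i) ξ
    have h1 : ht (restrict (ρ i) ξ) = ξ := hhtA ρ hρ ξ hξ i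
    rw [h1, restrict_restrict, min_eq_left hξζ]
    exact restrict_eq_of_agree (fun x hx => (hagree x hx i).symm)
  have hwedge : ∀ w ∈ twedge A, ¬ KTup T K n w := by
    rintro w ⟨σ', ⟨ρ, hρ, ξ, hξ, rfl⟩, τ', ⟨ρ', hρ', ζ, hζ, rfl⟩, hinc, rfl⟩
    have hρX := hYX hρ
    have hρ'X := hYX hρ'
    have hne : ρ ≠ ρ' := by
      rintro rfl
      rcases le_total ξ ζ with h | h
      · exact hinc.1 (hext_helper ρ hρ ρ hρ ξ ζ hξ hζ h (fun x _ i => rfl))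
      · exact hinc.2 (hext_helper ρ hρ ρ hρ ζ ξ hζ hξ h (fun x _ i => rfl))
    have hincρ : tIncomp ρ ρ' := hanti ρ hρX ρ' hρ'X hne
    have hdmem := tdelta_mem hne
    have hagree : ∀ x, x < tdelta ρ ρ' → ∀ i, (ρ i).1 x = (ρ' i).1 x :=
      fun x hx i => tdelta_lb hx i
    have hdξ : tdelta ρ ρ' < ξ := by
      by_contra hc
      push_neg at hc
      rcases le_total ξ ζ with h | h
      · exact hinc.1 (hext_helper ρ hρ ρ' hρ' ξ ζ hξ hζ h
          (fun x hx i => hagree x (lt_of_lt_of_le hx hc) i))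
      · exact hinc.2 (hext_helper ρ' hρ' ρ hρ ζ ξ hζ hξ h
          (fun x hx i => (hagree x (lt_of_lt_of_le hx (le_trans h hc)) i).symm))
    have hdζ : tdelta ρ ρ' < ζ := by
      by_contra hc
      push_neg at hc
      rcases le_total ξ ζ with h | h
      · exact hinc.1 (hext_helper ρ hρ ρ' hρ' ξ ζ hξ hζ h
          (fun x hx i => hagree x (lt_of_lt_of_le hx (le_trans h hc)) i))
      · exact hinc.2 (hext_helper ρ' hρ' ρ hρ ζ ξ hζ hξ h
          (fun x hx i => (hagree x (lt_of_lt_of_le hx hc) i).symm))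
    have hmem' : tdelta ρ ρ' ∈ tdiff (tres ρ ξ) (tres ρ' ζ) := by
      obtain ⟨i, hi⟩ := hdmem
      refine ⟨i, ?_⟩
      show (restrict (ρ i) ξ).1 (tdelta ρ ρ') ≠ (restrict (ρ' i) ζ).1 (tdelta ρ ρ')
      rw [restrict_val, if_pos hdξ, restrict_val, if_pos hdζ]
      exact hi
    have hlb' : ∀ x, x < tdelta ρ ρ' → x ∉ tdiff (tres ρ ξ) (tres ρ' ζ) := by
      rintro x hx ⟨i, hi⟩
      apply hi
      show (restrict (ρ i) ξ).1 x = (restrict (ρ' i) ζ).1 x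
      rw [restrict_val, if_pos (lt_trans hx hdξ), restrict_val, if_pos (lt_trans hx hdζ)]
      exact hagree x hx i
    have hdelta' : tdelta (tres ρ ξ) (tres ρ' ζ) = tdelta ρ ρ' := by
      refine le_antisymm (csInf_le (OrderBot.bddBelow _) hmem') ?_
      by_contra hc
      push_neg at hc
      exact hlb' _ hc (csInf_mem ⟨_, hmem'⟩)
    have hmeet : tmeet (tres ρ ξ) (tres ρ' ζ) = tmeet ρ ρ' := by
      show tres (tres ρ ξ) (tdelta (tres ρ ξ) (tres ρ' ζ)) = tres ρ (tdelta ρ ρ')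
      rw [hdelta', tres_tres, min_eq_left (le_of_lt hdξ)]
    rw [hmeet]
    exact hcon ρ hρX ρ' hρ'X hincρ
  have hAFn : A ∈ Fn T K n := ⟨⟨hA_tup, hA_closed, hA_unc⟩, hreg, hwedge⟩
  have hfin := hR.2 A hAFn
  rw [Set.inter_eq_left.mpr hAR] at hfin
  exact hA_unc hfin
end Basis5
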